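/- Let A be a complete normed ring with unit 1, R : ℝ → A Bochner measurable, β : ℝ → ℝ integrable with ‖R(τ)‖ ≤ β(τ) a.e., and Q(t,s) the Dyson series. Then for all s ≤ t, Q(·,s) satisfies the Volterra integral equation Q(t,s) = 1 + i ∫_s^t R(τ) · Q(τ,s) dτ. -/

import Mathlib

set_option maxHeartbeats 1000000

open MeasureTheory intervalIntegral Filter Topology Set

/-- Lipschitz-type estimate for powers on `[0, M]`. -/
lemma abs_pow_sub_pow_le_aux {x y M : ℝ} (hx : 0 ≤ x) (hxM : x ≤ M) (hy : 0 ≤ y) (hyM : y ≤ M) :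
    ∀ k : ℕ, |x ^ k - y ^ k| ≤ k * M ^ (k - 1) * |x - y| := by
  have hM : 0 ≤ M := hx.trans hxM
  intro k
  induction k with
  | zero => simp
  | succ k ih =>
    have key : x ^ (k + 1) - y ^ (k + 1) = x ^ k * (x - y) + (x ^ k - y ^ k) * y := by ring
    have h1 : |x ^ k * (x - y)| ≤ M ^ k * |x - y| := by
      rw [abs_mul]
      have : |x ^ k| ≤ M ^ k := by
        rw [abs_of_nonneg (pow_nonneg hx k)]; exact pow_le_pow_left₀ hx hxM k
      exact mul_le_mul_of_nonneg_right this (abs_nonneg _)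
    have h2 : |(x ^ k - y ^ k) * y| ≤ k * M ^ k * |x - y| := by
      rw [abs_mul]
      calc |x ^ k - y ^ k| * |y| ≤ (k * M ^ (k - 1) * |x - y|) * M := by
            apply mul_le_mul ih (by rwa [abs_of_nonneg hy]) (abs_nonneg _)
            positivity
        _ ≤ k * M ^ k * |x - y| := by
            rcases Nat.eq_zero_or_pos k with hk | hk
            · subst hk; simp
            · have : (k:ℝ) * M ^ (k - 1) * |x - y| * M = k * (M ^ (k-1) * M) * |x - y| := by ring
              rw [this, ← pow_succ, Nat.sub_add_cancel hk]
    calc |x ^ (k+1) - y ^ (k+1)| ≤ |x ^ k * (x - y)| + |(x ^ k - y ^ k) * y| := by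
          rw [key]; exact abs_add_le _ _
      _ ≤ M ^ k * |x - y| + k * M ^ k * |x - y| := add_le_add h1 h2
      _ = (k + 1 : ℕ) * M ^ ((k+1) - 1) * |x - y| := by push_cast; ring_nf

lemma intervalIntegrable_mul_cont {g b : ℝ → ℝ} (hg : Integrable g volume) (hb : Continuous b)
    (s τ : ℝ) : IntervalIntegrable (fun u => g u * b u) volume s τ := by
  have h : IntegrableOn (fun u => g u * b u) (uIcc s τ) volume :=
    IntegrableOn.mul_continuousOn hg.integrableOn hb.continuousOn isCompact_uIcc
  exact h.intervalIntegrable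

lemma primitive_mono {g : ℝ → ℝ} (hg : Integrable g volume) (hg0 : ∀ u, 0 ≤ g u) (s : ℝ) :
    Monotone (fun x => ∫ v in s..x, g v) := by
  intro a b hab
  have h1 : (∫ v in s..a, g v) + ∫ v in a..b, g v = ∫ v in s..b, g v :=
    integral_add_adjacent_intervals hg.intervalIntegrable hg.intervalIntegrable
  have h2 : 0 ≤ ∫ v in a..b, g v := intervalIntegral.integral_nonneg hab fun u _ => hg0 u
  simpa using le_of_sub_nonneg (by linarith : (0:ℝ) ≤ (∫ v in s..b, g v) - ∫ v in s..a, g v)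

/-- Key identity: `∫_s^τ g(u) B(u)^k du = B(τ)^{k+1}/(k+1)` where `B` is the primitive of the
nonnegative integrable function `g`. -/
lemma key_pow_integral {g : ℝ → ℝ} (hg : Integrable g volume) (hg0 : ∀ u, 0 ≤ g u)
    (s : ℝ) (k : ℕ) {τ : ℝ} (hsτ : s ≤ τ) :
    ∫ u in s..τ, g u * (∫ v in s..u, g v) ^ k
      = (∫ v in s..τ, g v) ^ (k + 1) / (k + 1) := by
  set B : ℝ → ℝ := fun x => ∫ v in s..x, g v with hB
  have hBc : Continuous B := continuous_primitive (fun a b => hg.intervalIntegrable) s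
  have hBmono : Monotone B := primitive_mono hg hg0 s
  have hBs : B s = 0 := integral_same
  -- approximation by continuous functions
  have happrox : ∀ n : ℕ, ∃ φ : ℝ → ℝ, Continuous φ ∧ Integrable φ volume ∧ (∀ u, 0 ≤ φ u) ∧
      (∫ x, |g x - φ x|) ≤ 1 / (n + 1) := by
    intro n
    obtain ⟨φ, -, hle, hφc, hφint⟩ :=
      hg.exists_hasCompactSupport_integral_sub_le (ε := 1 / ((n : ℝ) + 1)) (by positivity)
    refine ⟨fun u => |φ u|, hφc.abs, hφint.abs, fun u => abs_nonneg _, ?_⟩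
    refine le_trans ?_ hle
    apply integral_mono ((hg.sub hφint.abs).abs) ((hg.sub hφint).norm)
    intro u
    have h := abs_abs_sub_abs_le_abs_sub (g u) (φ u)
    rw [abs_of_nonneg (hg0 u)] at h
    simpa using h
  choose φ hφc hφint hφ0 hφapprox using happrox
  set C : ℕ → ℝ → ℝ := fun n x => ∫ v in s..x, φ n v with hC
  have hCc : ∀ n, Continuous (C n) := fun n =>
    continuous_primitive (fun a b => (hφint n).intervalIntegrable) s
  have hCmono : ∀ n, Monotone (C n) := fun n => primitive_mono (hφint n) (hφ0 n) s
  have hCs : ∀ n, C n s = 0 := fun n => integral_same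
  -- uniform closeness
  have hCB : ∀ n x, |C n x - B x| ≤ 1 / (n + 1) := by
    intro n x
    have hsub : C n x - B x = ∫ v in s..x, (φ n v - g v) :=
      (intervalIntegral.integral_sub (hφint n).intervalIntegrable hg.intervalIntegrable).symm
    rw [hsub, ← Real.norm_eq_abs]
    calc ‖∫ v in s..x, (φ n v - g v)‖ ≤ ∫ v in Set.uIoc s x, ‖φ n v - g v‖ :=
          intervalIntegral.norm_integral_le_integral_norm_uIoc
      _ ≤ ∫ v, ‖φ n v - g v‖ :=
          setIntegral_le_integral ((hφint n).sub hg).norm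
            (Filter.Eventually.of_forall fun v => norm_nonneg _)
      _ = ∫ v, |g v - φ n v| := by
          congr 1; funext v; rw [Real.norm_eq_abs, abs_sub_comm]
      _ ≤ 1 / (n + 1) := hφapprox n
  -- exact identity for the approximants
  have hCid : ∀ n, (∫ u in s..τ, φ n u * C n u ^ k) = C n τ ^ (k + 1) / (k + 1) := by
    intro n
    have hd : ∀ x, HasDerivAt (C n) (φ n x) x := fun x =>
      integral_hasDerivAt_right (hφint n).intervalIntegrable
        ((hφc n).stronglyMeasurable.stronglyMeasurableAtFilter) (hφc n).continuousAt
    have hd2 : ∀ x, HasDerivAt (fun y => C n y ^ (k + 1) / (k + 1))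
        (φ n x * C n x ^ k) x := by
      intro x
      have h := ((hd x).pow (k + 1)).div_const ((k : ℝ) + 1)
      refine h.congr_deriv ?_
      have hk : ((k : ℝ) + 1) ≠ 0 := by positivity
      rw [div_eq_iff hk]
      simp only [Nat.add_sub_cancel]
      push_cast
      ring
    have hInt : IntervalIntegrable (fun u => φ n u * C n u ^ k) volume s τ :=
      ((hφc n).mul ((hCc n).pow k)).intervalIntegrable s τ
    rw [intervalIntegral.integral_eq_sub_of_hasDerivAt (fun x _ => hd2 x) hInt, hCs n]
    norm_num
  -- limits
  have hε : Tendsto (fun n : ℕ => 1 / ((n : ℝ) + 1)) atTop (𝓝 0) :=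
    tendsto_one_div_add_atTop_nhds_zero_nat
  have hlim1 : Tendsto (fun n => C n τ) atTop (𝓝 (B τ)) := by
    have h0 : Tendsto (fun n => C n τ - B τ) atTop (𝓝 0) :=
      squeeze_zero_norm (fun n => hCB n τ) hε
    simpa using h0.add (tendsto_const_nhds (x := B τ))
  have hlim1' : Tendsto (fun n => C n τ ^ (k + 1) / ((k : ℝ) + 1)) atTop
      (𝓝 (B τ ^ (k + 1) / ((k : ℝ) + 1))) := by
    exact ((hlim1.pow (k + 1)).div_const _)
  -- the integrals converge
  set M : ℝ := B τ + 1 with hM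
  have hM0 : 0 ≤ M := by
    have : 0 ≤ B τ := by rw [← hBs]; exact hBmono hsτ
    linarith
  have hBbound : ∀ u ∈ Icc s τ, 0 ≤ B u ∧ B u ≤ M := by
    intro u hu
    constructor
    · rw [← hBs]; exact hBmono hu.1
    · have : B u ≤ B τ := hBmono hu.2
      linarith
  have hCbound : ∀ n, ∀ u ∈ Icc s τ, 0 ≤ C n u ∧ C n u ≤ M := by
    intro n u hu
    constructor
    · rw [← hCs n]; exact hCmono n hu.1
    · have h1 : C n u - B u ≤ 1 / (n + 1) := (abs_le.mp (hCB n u)).2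
      have h2 : (1 : ℝ) / (n + 1) ≤ 1 := by
        rw [div_le_one (by positivity)]
        simp
      have := (hBbound u hu).2
      have hBu : B u ≤ B τ := hBmono hu.2
      linarith
  set G : ℝ := ∫ x, g x with hG
  have hsτG : ∀ n, (∫ u in s..τ, |φ n u - g u|) ≤ 1 / (n + 1) := by
    intro n
    rw [intervalIntegral.integral_of_le hsτ]
    calc (∫ u in Ioc s τ, |φ n u - g u|) ≤ ∫ u, |φ n u - g u| :=
          setIntegral_le_integral ((hφint n).sub hg).abs
            (Filter.Eventually.of_forall fun v => abs_nonneg _)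
      _ = ∫ v, |g v - φ n v| := by
          congr 1; funext v; rw [abs_sub_comm]
      _ ≤ 1 / (n + 1) := hφapprox n
  have hsτg : (∫ u in s..τ, g u) ≤ G := by
    rw [intervalIntegral.integral_of_le hsτ]
    exact setIntegral_le_integral hg (Filter.Eventually.of_forall fun v => hg0 v)
  have hlim2 : Tendsto (fun n => ∫ u in s..τ, φ n u * C n u ^ k) atTop
      (𝓝 (∫ u in s..τ, g u * B u ^ k)) := by
    have hgB : IntervalIntegrable (fun u => g u * B u ^ k) volume s τ :=
      intervalIntegrable_mul_cont hg (hBc.pow k) s τ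
    have key : ∀ n, |(∫ u in s..τ, φ n u * C n u ^ k) - ∫ u in s..τ, g u * B u ^ k| ≤
        (M ^ k + k * M ^ (k - 1) * G) * (1 / (n + 1)) := by
      intro n
      have hφC : IntervalIntegrable (fun u => φ n u * C n u ^ k) volume s τ :=
        ((hφc n).mul ((hCc n).pow k)).intervalIntegrable s τ
      have hsub : (∫ u in s..τ, φ n u * C n u ^ k) - (∫ u in s..τ, g u * B u ^ k)
          = ∫ u in s..τ, (φ n u * C n u ^ k - g u * B u ^ k) :=
        (intervalIntegral.integral_sub hφC hgB).symm
      set bound : ℝ → ℝ :=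
        fun u => |φ n u - g u| * M ^ k + g u * (k * M ^ (k - 1) * (1 / (n + 1))) with hbd
      have hboundInt : IntervalIntegrable bound volume s τ := by
        apply IntervalIntegrable.add
        · exact ((((hφint n).sub hg).abs.mul_const _).intervalIntegrable :
            IntervalIntegrable (fun u => |φ n u - g u| * M ^ k) volume s τ)
        · exact (((hg.mul_const _).intervalIntegrable) :
            IntervalIntegrable (fun u => g u * (k * M ^ (k - 1) * (1 / (n + 1)))) volume s τ)
      have hptwise : ∀ᵐ u ∂(volume.restrict (Set.uIoc s τ)),
          ‖φ n u * C n u ^ k - g u * B u ^ k‖ ≤ bound u := by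
        filter_upwards [ae_restrict_mem measurableSet_uIoc] with u hu
        rw [Set.uIoc_of_le hsτ] at hu
        have huIcc : u ∈ Icc s τ := ⟨hu.1.le, hu.2⟩
        obtain ⟨hB0, hBM⟩ := hBbound u huIcc
        obtain ⟨hC0, hCM⟩ := hCbound n u huIcc
        have h1 : |φ n u * C n u ^ k - g u * B u ^ k|
            ≤ |φ n u - g u| * C n u ^ k + g u * |C n u ^ k - B u ^ k| := by
          have : φ n u * C n u ^ k - g u * B u ^ k
              = (φ n u - g u) * C n u ^ k + g u * (C n u ^ k - B u ^ k) := by ring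
          rw [this]
          refine (abs_add_le _ _).trans ?_
          rw [abs_mul, abs_mul, abs_of_nonneg (pow_nonneg hC0 k), abs_of_nonneg (hg0 u)]
        have h2 : |C n u ^ k - B u ^ k| ≤ k * M ^ (k - 1) * (1 / (n + 1)) := by
          refine (abs_pow_sub_pow_le_aux hC0 hCM hB0 hBM k).trans ?_
          exact mul_le_mul_of_nonneg_left (hCB n u) (by positivity)
        calc ‖φ n u * C n u ^ k - g u * B u ^ k‖
            = |φ n u * C n u ^ k - g u * B u ^ k| := rfl
          _ ≤ |φ n u - g u| * C n u ^ k + g u * |C n u ^ k - B u ^ k| := h1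
          _ ≤ |φ n u - g u| * M ^ k + g u * (k * M ^ (k - 1) * (1 / (n + 1))) := by
              apply add_le_add
              · exact mul_le_mul_of_nonneg_left
                  (pow_le_pow_left₀ hC0 hCM k) (abs_nonneg _)
              · exact mul_le_mul_of_nonneg_left h2 (hg0 u)
      have h1i : IntervalIntegrable (fun u => |φ n u - g u| * M ^ k) volume s τ :=
        (((hφint n).sub hg).abs.mul_const _).intervalIntegrable
      have h2i : IntervalIntegrable (fun u => g u * (k * M ^ (k - 1) * (1 / (n + 1)))) volume s τ :=
        (hg.mul_const _).intervalIntegrable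
      have hboundval : (∫ u in s..τ, bound u) ≤ (M ^ k + k * M ^ (k - 1) * G) * (1 / (n + 1)) := by
        simp only [hbd]
        rw [intervalIntegral.integral_add h1i h2i]
        rw [intervalIntegral.integral_mul_const, intervalIntegral.integral_mul_const]
        have e1 : (∫ u in s..τ, |φ n u - g u|) * M ^ k ≤ (1 / (n + 1)) * M ^ k :=
          mul_le_mul_of_nonneg_right (hsτG n) (by positivity)
        have hG0 : 0 ≤ ∫ u in s..τ, g u :=
          intervalIntegral.integral_nonneg hsτ fun u _ => hg0 u
        have e2 : (∫ u in s..τ, g u) * (k * M ^ (k - 1) * (1 / (n + 1)))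
            ≤ G * (k * M ^ (k - 1) * (1 / (n + 1))) :=
          mul_le_mul_of_nonneg_right hsτg (by positivity)
        nlinarith [e1, e2]
      calc |(∫ u in s..τ, φ n u * C n u ^ k) - ∫ u in s..τ, g u * B u ^ k|
          = ‖∫ u in s..τ, (φ n u * C n u ^ k - g u * B u ^ k)‖ := by rw [hsub]; rfl
        _ ≤ |∫ u in s..τ, bound u| :=
            intervalIntegral.norm_integral_le_abs_of_norm_le hptwise hboundInt
        _ ≤ (M ^ k + k * M ^ (k - 1) * G) * (1 / (n + 1)) := by
            rw [abs_of_nonneg]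
            · exact hboundval
            · apply intervalIntegral.integral_nonneg hsτ
              intro u hu
              have : 0 ≤ g u := hg0 u
              positivity
    have h0 : Tendsto (fun n => (∫ u in s..τ, φ n u * C n u ^ k)
        - ∫ u in s..τ, g u * B u ^ k) atTop (𝓝 0) := by
      apply squeeze_zero_norm key
      simpa using hε.const_mul (M ^ k + k * M ^ (k - 1) * G)
    simpa using h0.add (tendsto_const_nhds (x := ∫ u in s..τ, g u * B u ^ k))
  exact tendsto_nhds_unique hlim2 (by simpa [hCid] using hlim1')

/-- The `k`-fold time-ordered iterated Bochner integral
`∫_s^t R(t₁) (∫_s^{t₁} R(t₂) ( ⋯ (∫_s^{t_{k−1}} R(t_k) dt_k) ⋯ ) dt₂) dt₁`. -/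
noncomputable def timeOrderedIntegral {A : Type*} [NormedRing A] [NormedSpace ℝ A]
    (f : ℝ → A) (s : ℝ) : ℕ → ℝ → A
  | 0, _ => 1
  | k + 1, t => ∫ τ in s..t, f τ * timeOrderedIntegral f s k τ

lemma timeOrdered_props {A : Type*} [NormedRing A] [NormedSpace ℝ A] [CompleteSpace A]
    {R : ℝ → A} {g : ℝ → ℝ}
    (hR : AEStronglyMeasurable R (volume : Measure ℝ)) (hg : Integrable g volume)
    (hg0 : ∀ u, 0 ≤ g u) (hRg : ∀ᵐ τ ∂(volume : Measure ℝ), ‖R τ‖ ≤ g τ)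
    (s t : ℝ) (hst : s ≤ t) (k : ℕ) :
    ContinuousOn (timeOrderedIntegral R s k) (Icc s t) ∧
    ∀ τ ∈ Icc s t, ‖timeOrderedIntegral R s k τ‖
        ≤ ‖(1 : A)‖ * (∫ v in s..τ, g v) ^ k / (Nat.factorial k) := by
  set B : ℝ → ℝ := fun x => ∫ v in s..x, g v with hBdef
  have hBc : Continuous B := continuous_primitive (fun a b => hg.intervalIntegrable) s
  have hBmono : Monotone B := primitive_mono hg hg0 s
  have hBs : B s = 0 := integral_same
  have hB0 : ∀ u, s ≤ u → 0 ≤ B u := fun u hu => by rw [← hBs]; exact hBmono hu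
  induction k with
  | zero =>
    constructor
    · simp only [timeOrderedIntegral]
      exact continuousOn_const
    · intro τ hτ
      simp [timeOrderedIntegral, Nat.factorial]
  | succ k ih =>
    obtain ⟨ihc, ihb⟩ := ih
    set T := timeOrderedIntegral R s k with hTdef
    set N := ‖(1 : A)‖ with hN
    have hN0 : 0 ≤ N := norm_nonneg _
    set c : ℝ := N * B t ^ k / (Nat.factorial k) with hc
    have hc0 : 0 ≤ c := by
      have := hB0 t hst
      positivity
    have hTb : ∀ τ ∈ Icc s t, ‖T τ‖ ≤ c := by
      intro τ hτ
      refine (ihb τ hτ).trans ?_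
      rw [hc]
      gcongr
      · exact hB0 τ hτ.1
      · exact hBmono hτ.2
    have hint : IntegrableOn (fun u => R u * T u) (Icc s t) volume := by
      apply Integrable.mono' ((hg.mul_const c).integrableOn)
      · exact hR.restrict.mul (ihc.aestronglyMeasurable measurableSet_Icc)
      · filter_upwards [ae_restrict_mem measurableSet_Icc, ae_restrict_of_ae hRg] with u hu hRu
        calc ‖R u * T u‖ ≤ ‖R u‖ * ‖T u‖ := norm_mul_le _ _
          _ ≤ g u * c := mul_le_mul hRu (hTb u hu) (norm_nonneg _)
              (le_trans (norm_nonneg _) hRu)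
    have hcont : ContinuousOn (fun x => ∫ u in s..x, R u * T u) (Icc s t) := by
      have h2 := continuousOn_primitive_interval
        (by rwa [uIcc_of_le hst] : IntegrableOn (fun u => R u * T u) (uIcc s t) volume)
      rwa [uIcc_of_le hst] at h2
    constructor
    · have heq : timeOrderedIntegral R s (k + 1) = fun x => ∫ u in s..x, R u * T u := by
        funext x; rw [timeOrderedIntegral]
      rw [heq]; exact hcont
    · intro τ hτ
      have hτs : s ≤ τ := hτ.1
      have hb2 : IntervalIntegrable (fun u => g u * (N * B u ^ k / (Nat.factorial k)))
          volume s τ := intervalIntegrable_mul_cont hg (by fun_prop) s τ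
      have hnorm : ‖timeOrderedIntegral R s (k + 1) τ‖
          ≤ |∫ u in s..τ, g u * (N * B u ^ k / (Nat.factorial k))| := by
        have heq : timeOrderedIntegral R s (k + 1) τ = ∫ u in s..τ, R u * T u := by
          rw [timeOrderedIntegral]
        rw [heq]
        apply intervalIntegral.norm_integral_le_abs_of_norm_le _ hb2
        rw [Set.uIoc_of_le hτs]
        filter_upwards [ae_restrict_mem measurableSet_Ioc, ae_restrict_of_ae hRg] with u hu hRu
        have huI : u ∈ Icc s t := ⟨hu.1.le, hu.2.trans hτ.2⟩
        have hBu0 : 0 ≤ B u := hB0 u huI.1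
        calc ‖R u * T u‖ ≤ ‖R u‖ * ‖T u‖ := norm_mul_le _ _
          _ ≤ g u * (N * B u ^ k / (Nat.factorial k)) :=
              mul_le_mul hRu (ihb u huI) (norm_nonneg _) (le_trans (norm_nonneg _) hRu)
      have hval : (∫ u in s..τ, g u * (N * B u ^ k / (Nat.factorial k)))
          = (N / (Nat.factorial k)) * (B τ ^ (k + 1) / (k + 1)) := by
        have h1 : (∫ u in s..τ, g u * (N * B u ^ k / (Nat.factorial k)))
            = ∫ u in s..τ, (N / (Nat.factorial k)) * (g u * B u ^ k) := by
          apply intervalIntegral.integral_congr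
          intro u hu
          ring
        rw [h1, intervalIntegral.integral_const_mul, key_pow_integral hg hg0 s k hτs]
      have hfinal : (N / (Nat.factorial k)) * (B τ ^ (k + 1) / (k + 1))
          = N * B τ ^ (k + 1) / (Nat.factorial (k + 1)) := by
        rw [Nat.factorial_succ, div_mul_div_comm]
        push_cast
        ring_nf
      rw [hval, hfinal] at hnorm
      refine hnorm.trans ?_
      rw [abs_of_nonneg]
      have := hB0 τ hτs
      positivity

/-- The Dyson series
`Q(t,s) = 1 + Σ_{k≥1} i^k ∫_s^t R(t₁) ∫_s^{t₁} R(t₂) ⋯ ∫_s^{t_{k−1}} R(t_k) dt_k ⋯ dt₁`. -/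
noncomputable def dyson {A : Type*} [NormedRing A] [NormedAlgebra ℂ A]
    (R : ℝ → A) (s t : ℝ) : A :=
  1 + ∑' k : ℕ, (Complex.I ^ (k + 1)) • timeOrderedIntegral R s (k + 1) t

theorem dyson_volterra_integral_equation
    {A : Type*} [NormedRing A] [NormedAlgebra ℂ A] [CompleteSpace A]
    (R : ℝ → A) (β : ℝ → ℝ)
    (hR : AEStronglyMeasurable R (volume : Measure ℝ))
    (hβ : Integrable β (volume : Measure ℝ))
    (hRβ : ∀ᵐ τ ∂(volume : Measure ℝ), ‖R τ‖ ≤ β τ)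
    (s t : ℝ) (hst : s ≤ t) :
    dyson R s t = 1 + Complex.I • ∫ τ in s..t, R τ * dyson R s τ := by
  set g : ℝ → ℝ := fun τ => |β τ| with hgdef
  have hg : Integrable g volume := hβ.abs
  have hg0 : ∀ u, 0 ≤ g u := fun u => abs_nonneg _
  have hRg : ∀ᵐ τ ∂(volume : Measure ℝ), ‖R τ‖ ≤ g τ :=
    hRβ.mono fun τ h => h.trans (le_abs_self _)
  set B : ℝ → ℝ := fun x => ∫ v in s..x, g v with hBdef
  have hBmono : Monotone B := primitive_mono hg hg0 s
  have hBs : B s = 0 := integral_same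
  have hB0 : ∀ u, s ≤ u → 0 ≤ B u := fun u hu => by rw [← hBs]; exact hBmono hu
  set N : ℝ := ‖(1 : A)‖ with hNdef
  have hN0 : 0 ≤ N := norm_nonneg _
  set T : ℕ → ℝ → A := timeOrderedIntegral R s with hTdef
  have Tprops : ∀ k, ContinuousOn (T k) (Icc s t) ∧
      ∀ τ ∈ Icc s t, ‖T k τ‖ ≤ N * B τ ^ k / (Nat.factorial k) := fun k =>
    timeOrdered_props hR hg hg0 hRg s t hst k
  set c : ℕ → ℝ := fun k => N * B t ^ k / (Nat.factorial k) with hcdef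
  have hc0 : ∀ k, 0 ≤ c k := by
    intro k
    have := hB0 t hst
    positivity
  have hsum_c : Summable c := by
    have h1 : Summable (fun k : ℕ => B t ^ k / (Nat.factorial k)) :=
      Real.summable_pow_div_factorial (B t)
    have h2 := h1.mul_left N
    simpa [hcdef, mul_div_assoc] using h2
  -- pointwise norm bound on the summands
  have hsummand : ∀ k, ∀ τ ∈ Icc s t, ‖(Complex.I ^ k) • T k τ‖ ≤ c k := by
    intro k τ hτ
    rw [norm_smul, norm_pow, Complex.norm_I, one_pow, one_mul]
    refine ((Tprops k).2 τ hτ).trans ?_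
    have hBτ0 : 0 ≤ B τ := hB0 τ hτ.1
    have hBτ : B τ ≤ B t := hBmono hτ.2
    have h : N * B τ ^ k / (Nat.factorial k) ≤ N * B t ^ k / (Nat.factorial k) := by gcongr
    simpa [hcdef] using h
  -- the Dyson series as a `HasSum`
  have hS : ∀ τ ∈ Icc s t, HasSum (fun k => (Complex.I ^ k) • T k τ) (dyson R s τ) := by
    intro τ hτ
    have hsummable : Summable (fun k => (Complex.I ^ k) • T k τ) :=
      Summable.of_norm (Summable.of_nonneg_of_le (fun k => norm_nonneg _)
        (fun k => hsummand k τ hτ) hsum_c)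
    have h0 : dyson R s τ = ∑' k, (Complex.I ^ k) • T k τ := by
      rw [hsummable.tsum_eq_zero_add]
      have : (Complex.I ^ 0) • T 0 τ = 1 := by
        rw [hTdef]
        simp [timeOrderedIntegral]
      rw [this, dyson]
    rw [h0]
    exact hsummable.hasSum
  -- measurability of the summands
  have hmeasT : ∀ k : ℕ, AEStronglyMeasurable (fun τ => (Complex.I ^ k) • (R τ * T k τ))
      (volume.restrict (Ioc s t)) := by
    intro k
    have h1 : AEStronglyMeasurable (T k) (volume.restrict (Ioc s t)) :=
      ((Tprops k).1.aestronglyMeasurable measurableSet_Icc).mono_measure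
        (Measure.restrict_mono Ioc_subset_Icc_self le_rfl)
    exact (hR.restrict.mul h1).const_smul _
  -- uniform integrable bound
  have hFbound : ∀ k : ℕ, ∀ᵐ τ ∂(volume.restrict (Ioc s t)),
      ‖(Complex.I ^ k) • (R τ * T k τ)‖ ≤ g τ * c k := by
    intro k
    filter_upwards [ae_restrict_mem measurableSet_Ioc, ae_restrict_of_ae hRg] with τ hτ hRτ
    have hτ' : τ ∈ Icc s t := Ioc_subset_Icc_self hτ
    rw [norm_smul, norm_pow, Complex.norm_I, one_pow, one_mul]
    calc ‖R τ * T k τ‖ ≤ ‖R τ‖ * ‖T k τ‖ := norm_mul_le _ _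
      _ ≤ g τ * c k := by
          refine mul_le_mul hRτ ?_ (norm_nonneg _) (le_trans (norm_nonneg _) hRτ)
          refine ((Tprops k).2 τ hτ').trans ?_
          have hBτ0 : 0 ≤ B τ := hB0 τ hτ'.1
          have hBτ : B τ ≤ B t := hBmono hτ'.2
          have h : N * B τ ^ k / (Nat.factorial k) ≤ N * B t ^ k / (Nat.factorial k) := by gcongr
          simpa [hcdef] using h
  set G : ℝ := ∫ x, g x with hGdef
  have hG0 : 0 ≤ G := integral_nonneg hg0
  have hlint : ∀ k : ℕ, (∫⁻ τ in Ioc s t, ‖(Complex.I ^ k) • (R τ * T k τ)‖₊)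
      ≤ ENNReal.ofReal (G * c k) := by
    intro k
    have h1 : (∫⁻ τ in Ioc s t, ‖(Complex.I ^ k) • (R τ * T k τ)‖₊)
        ≤ ∫⁻ τ in Ioc s t, ENNReal.ofReal (g τ * c k) := by
      refine lintegral_mono_ae ?_
      filter_upwards [hFbound k] with τ hτ
      rw [← enorm_eq_nnnorm, ← ofReal_norm]
      exact ENNReal.ofReal_le_ofReal hτ
    have h2 : (∫⁻ τ in Ioc s t, ENNReal.ofReal (g τ * c k))
        = ENNReal.ofReal (∫ τ in Ioc s t, g τ * c k) := by
      rw [← ofReal_integral_eq_lintegral_ofReal ((hg.mul_const (c k)).integrableOn)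
        (Filter.Eventually.of_forall fun τ => mul_nonneg (hg0 τ) (hc0 k))]
    have h3 : (∫ τ in Ioc s t, g τ * c k) ≤ G * c k := by
      rw [MeasureTheory.integral_mul_const]
      exact mul_le_mul_of_nonneg_right
        (setIntegral_le_integral hg (Filter.Eventually.of_forall hg0)) (hc0 k)
    exact h1.trans (h2.trans_le (ENNReal.ofReal_le_ofReal h3))
  have hlsum : (∑' k : ℕ, ∫⁻ τ in Ioc s t, ‖(Complex.I ^ k) • (R τ * T k τ)‖₊) ≠ ⊤ := by
    refine ne_top_of_le_ne_top ?_ (ENNReal.tsum_le_tsum hlint)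
    rw [← ENNReal.ofReal_tsum_of_nonneg (fun k => mul_nonneg hG0 (hc0 k)) (hsum_c.mul_left G)]
    exact ENNReal.ofReal_ne_top
  -- swap integral and sum
  have hswap := integral_tsum hmeasT hlsum
  -- pointwise identity
  have hpt : ∀ᵐ τ ∂(volume.restrict (Ioc s t)),
      R τ * dyson R s τ = ∑' k, (Complex.I ^ k) • (R τ * T k τ) := by
    filter_upwards [ae_restrict_mem measurableSet_Ioc] with τ hτ
    have h1 := (hS τ (Ioc_subset_Icc_self hτ)).mul_left (R τ)
    simp_rw [mul_smul_comm] at h1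
    exact h1.tsum_eq.symm
  -- per-term integrals
  have hterm : ∀ k : ℕ, (∫ τ in Ioc s t, (Complex.I ^ k) • (R τ * T k τ))
      = (Complex.I ^ k) • T (k + 1) t := by
    intro k
    rw [MeasureTheory.integral_smul]
    congr 1
    rw [hTdef]
    rw [timeOrderedIntegral, intervalIntegral.integral_of_le hst]
  have hmain : (∫ τ in s..t, R τ * dyson R s τ) = ∑' k, (Complex.I ^ k) • T (k + 1) t := by
    rw [intervalIntegral.integral_of_le hst, integral_congr_ae hpt, hswap]
    exact tsum_congr hterm
  rw [hmain]
  -- pull `I •` inside the sum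
  have hsummable2 : Summable (fun k => (Complex.I ^ k) • T (k + 1) t) := by
    apply Summable.of_norm
    refine Summable.of_nonneg_of_le (fun k => norm_nonneg _)
      (fun k => ?_) (hsum_c.comp_injective Nat.succ_injective)
    have h := hsummand (k + 1) t (right_mem_Icc.mpr hst)
    rw [norm_smul, norm_pow, Complex.norm_I, one_pow, one_mul] at h ⊢
    exact h
  have hIs : Complex.I • (∑' k, (Complex.I ^ k) • T (k + 1) t)
      = ∑' k, (Complex.I ^ (k + 1)) • T (k + 1) t := by
    rw [← (hsummable2.hasSum.const_smul Complex.I).tsum_eq]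
    refine tsum_congr fun k => ?_
    rw [smul_smul, ← pow_succ']
  rw [hIs, dyson]
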